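/- In the one-dimensional model Y|β ~ N(β,1) with the generalized bridge prior (β|γ,λ,α having density proportional to exp(−γλ|β|^α/2), λ mixture of Gamma(e,f) components with equal hyperparameters e₁=e₂=e, f₁=f₂=f, and α ~ Unif(k₁,k₂) with 0<k₁<k₂≤4), the marginal density m(y) satisfies lim_{|y|→∞} (d/dy) log m(y) = 0, and consequently |y − E(β|y)| is bounded in y. -/

import Mathlib

open MeasureTheory Real Filter Set Topology

namespace TailRob

/-- weight in `a` -/
noncomputable def w (e f a : ℝ) : ℝ :=
  a / (2 ^ (1 / a + 1) * Real.Gamma (1 / a)) * (f ^ e / Real.Gamma e) * Real.Gamma (e + 1 / a)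

/-- kernel in `β` -/
noncomputable def q (e f a β : ℝ) : ℝ := (|β| ^ a / 2 + f) ^ (-e - 1 / a)

/-- mixed density -/
noncomputable def g (e f k₁ k₂ β : ℝ) : ℝ := ∫ a in Ioc k₁ k₂, w e f a * q e f a β

/-- ratio bound function -/
noncomputable def H (e f k₁ t : ℝ) : ℝ :=
  (16 * (1 + (1 + |t|) ^ (4 : ℕ) / (2 * f))) ^ (e + 1 / k₁)

variable {e f k₁ k₂ a β t y : ℝ}

lemma w_pos (he : 0 < e) (hf : 0 < f) (ha : 0 < a) : 0 < w e f a := by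
  have h1 : 0 < 1 / a := by positivity
  have := Real.Gamma_pos_of_pos h1
  have := Real.Gamma_pos_of_pos he
  have := Real.Gamma_pos_of_pos (by positivity : (0:ℝ) < e + 1 / a)
  have h2 : (0:ℝ) < 2 ^ (1 / a + 1) := Real.rpow_pos_of_pos (by norm_num) _
  have h3 : (0:ℝ) < f ^ e := Real.rpow_pos_of_pos hf _
  unfold w
  positivity

lemma base_pos (hf : 0 < f) : 0 < |β| ^ a / 2 + f := by
  have : (0:ℝ) ≤ |β| ^ a := Real.rpow_nonneg (abs_nonneg _) _
  linarith

lemma q_pos (hf : 0 < f) : 0 < q e f a β := Real.rpow_pos_of_pos (base_pos hf) _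

lemma q_le (he : 0 < e) (hf : 0 < f) (hk1 : 0 < k₁) (ha : k₁ ≤ a) (ha2 : a ≤ k₂)
    (hkk : k₁ < k₂) :
    q e f a β ≤ max (f ^ (-e - 1 / k₁)) (f ^ (-e - 1 / k₂)) := by
  have ha0 : 0 < a := lt_of_lt_of_le hk1 ha
  have hk2 : 0 < k₂ := lt_trans hk1 hkk
  have h1 : q e f a β ≤ f ^ (-e - 1 / a) := by
    apply Real.rpow_le_rpow_of_nonpos hf
    · have : (0:ℝ) ≤ |β| ^ a := Real.rpow_nonneg (abs_nonneg _) _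
      linarith
    · have : 0 < 1 / a := by positivity
      linarith
  refine h1.trans ?_
  rcases le_or_gt 1 f with h | h
  · refine le_max_of_le_right (Real.rpow_le_rpow_of_exponent_le h ?_)
    have := one_div_le_one_div_of_le ha0 ha2
    linarith
  · refine le_max_of_le_left (Real.rpow_le_rpow_of_exponent_ge hf h.le ?_)
    have := one_div_le_one_div_of_le hk1 ha
    linarith

lemma q_cont (hf : 0 < f) (ha : 0 < a) : Continuous fun β => q e f a β := by
  have h1 : Continuous fun β : ℝ => |β| ^ a :=
    continuous_abs.rpow_const fun x => Or.inr ha.le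
  have h2 : Continuous fun β : ℝ => |β| ^ a / 2 + f := by continuity
  exact h2.rpow_const fun x => Or.inl (base_pos hf).ne'

lemma Gamma_contAt {x : ℝ} (hx : 0 < x) : ContinuousAt Real.Gamma x := by
  refine (Real.differentiableAt_Gamma fun m => ?_).continuousAt
  have h : -(m:ℝ) ≤ 0 := neg_nonpos.mpr (Nat.cast_nonneg m)
  intro hc; rw [hc] at hx; linarith

lemma w_contAt (he : 0 < e) (ha0 : 0 < a) : ContinuousAt (w e f) a := by
  have h1a : ContinuousAt (fun a : ℝ => 1 / a) a :=
    continuousAt_const.div continuousAt_id ha0.ne'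
  have hia : 0 < 1 / a := by positivity
  have hG : ContinuousAt (fun a : ℝ => Real.Gamma (1 / a)) a :=
    (Gamma_contAt hia).comp h1a
  have hG2 : ContinuousAt (fun a : ℝ => Real.Gamma (e + 1 / a)) a :=
    (Gamma_contAt (by positivity)).comp (continuousAt_const.add h1a)
  have hpow : ContinuousAt (fun a : ℝ => (2:ℝ) ^ (1 / a + 1)) a :=
    ContinuousAt.rpow continuousAt_const (h1a.add continuousAt_const)
      (Or.inl (by norm_num))
  have hden : (2:ℝ) ^ (1 / a + 1) * Real.Gamma (1 / a) ≠ 0 := by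
    have h2 : (0:ℝ) < 2 ^ (1 / a + 1) := Real.rpow_pos_of_pos (by norm_num) _
    have := Real.Gamma_pos_of_pos hia
    positivity
  exact ((continuousAt_id.div (hpow.mul hG) hden).mul continuousAt_const).mul hG2

lemma q_contAt_a (hf : 0 < f) (ha0 : 0 < a) : ContinuousAt (fun a => q e f a β) a := by
  have h1 : ContinuousAt (fun a : ℝ => |β| ^ a) a := by
    have h0 := Real.continuousAt_rpow (|β|, a) (Or.inr ha0)
    exact h0.comp (Continuous.continuousAt (by continuity : Continuous fun a : ℝ => (|β|, a)))
  have hbase : ContinuousAt (fun a : ℝ => |β| ^ a / 2 + f) a :=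
    ((h1.div continuousAt_const (by norm_num)).add continuousAt_const)
  have hexp : ContinuousAt (fun a : ℝ => -e - 1 / a) a :=
    (continuousAt_const.sub (continuousAt_const.div continuousAt_id ha0.ne'))
  exact ContinuousAt.rpow hbase hexp (Or.inl (base_pos hf).ne')

lemma wq_contAt_a (he : 0 < e) (hf : 0 < f) (ha0 : 0 < a) :
    ContinuousAt (fun a => w e f a * q e f a β) a :=
  (w_contAt he ha0).mul (q_contAt_a hf ha0)

lemma wq_aesm (he : 0 < e) (hf : 0 < f) (hk1 : 0 < k₁) :
    AEStronglyMeasurable (fun a => w e f a * q e f a β)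
      (volume.restrict (Ioc k₁ k₂)) := by
  apply ContinuousOn.aestronglyMeasurable _ measurableSet_Ioc
  intro a ha
  exact (wq_contAt_a he hf (lt_trans hk1 ha.1)).continuousWithinAt

/-- a uniform bound for `w` on the interval -/
lemma w_bound (he : 0 < e) (hf : 0 < f) (hk1 : 0 < k₁) (hk : k₁ < k₂) :
    ∃ W : ℝ, 0 < W ∧ ∀ a ∈ Icc k₁ k₂, w e f a ≤ W := by
  obtain ⟨A, hA, hAmax⟩ := isCompact_Icc.exists_isMaxOn ⟨k₁, left_mem_Icc.2 hk.le⟩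
    (fun a ha => (w_contAt he (lt_of_lt_of_le hk1 ha.1) :
      ContinuousAt (w e f) a).continuousWithinAt)
  exact ⟨w e f A, w_pos he hf (lt_of_lt_of_le hk1 hA.1), fun a ha => hAmax ha⟩

lemma wq_integrableOn (he : 0 < e) (hf : 0 < f) (hk1 : 0 < k₁) (hk : k₁ < k₂) :
    IntegrableOn (fun a => w e f a * q e f a β) (Ioc k₁ k₂) := by
  obtain ⟨W, hW, hWb⟩ := w_bound (e := e) (f := f) he hf hk1 hk
  set C₀ := max (f ^ (-e - 1 / k₁)) (f ^ (-e - 1 / k₂)) with hC₀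
  refine Integrable.mono' (g := fun _ => W * C₀) (integrable_const _)
    (wq_aesm he hf hk1) ?_
  filter_upwards [ae_restrict_mem measurableSet_Ioc] with a ha
  have ha0 : 0 < a := lt_trans hk1 ha.1
  have h1 : 0 ≤ w e f a * q e f a β :=
    mul_nonneg (w_pos he hf ha0).le (q_pos hf).le
  rw [Real.norm_eq_abs, abs_of_nonneg h1]
  exact mul_le_mul (hWb a ⟨ha.1.le, ha.2⟩) (q_le he hf hk1 ha.1.le ha.2 hk)
    (q_pos hf).le hW.le

lemma g_pos (he : 0 < e) (hf : 0 < f) (hk1 : 0 < k₁) (hk : k₁ < k₂) :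
    0 < g e f k₁ k₂ β := by
  rw [g, setIntegral_pos_iff_support_of_nonneg_ae]
  · have hsub : Ioc k₁ k₂ ⊆ Function.support (fun a => w e f a * q e f a β) ∩ Ioc k₁ k₂ := by
      intro a ha
      refine ⟨?_, ha⟩
      have ha0 : 0 < a := lt_trans hk1 ha.1
      exact (mul_pos (w_pos he hf ha0) (q_pos hf)).ne'
    calc (0 : ENNReal) < volume (Ioc k₁ k₂) := by
          rw [Real.volume_Ioc]; simp [sub_pos.2 hk]
      _ ≤ _ := measure_mono hsub
  · filter_upwards [ae_restrict_mem measurableSet_Ioc] with a ha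
    exact mul_nonneg (w_pos he hf (lt_trans hk1 ha.1)).le (q_pos hf).le
  · exact wq_integrableOn he hf hk1 hk

lemma g_bdd (he : 0 < e) (hf : 0 < f) (hk1 : 0 < k₁) (hk : k₁ < k₂) :
    ∃ B : ℝ, 0 < B ∧ ∀ β : ℝ, g e f k₁ k₂ β ≤ B := by
  obtain ⟨W, hW, hWb⟩ := w_bound (e := e) (f := f) he hf hk1 hk
  set C₀ := max (f ^ (-e - 1 / k₁)) (f ^ (-e - 1 / k₂)) with hC₀
  have hC₀pos : 0 < C₀ := lt_max_of_lt_left (Real.rpow_pos_of_pos hf _)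
  refine ⟨(k₂ - k₁) * (W * C₀), by nlinarith [sub_pos.2 hk, mul_pos hW hC₀pos], fun β => ?_⟩
  have h1 : g e f k₁ k₂ β ≤ ∫ _ in Ioc k₁ k₂, W * C₀ := by
    refine setIntegral_mono_on (wq_integrableOn he hf hk1 hk)
      (integrable_const _) measurableSet_Ioc ?_
    intro a ha
    exact mul_le_mul (hWb a ⟨ha.1.le, ha.2⟩) (q_le he hf hk1 ha.1.le ha.2 hk)
      (q_pos hf).le hW.le
  refine h1.trans ?_
  rw [setIntegral_const, Real.volume_real_Ioc_of_le hk.le]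
  simp [smul_eq_mul]

lemma g_cont (he : 0 < e) (hf : 0 < f) (hk1 : 0 < k₁) (hk : k₁ < k₂) :
    Continuous (g e f k₁ k₂) := by
  obtain ⟨W, hW, hWb⟩ := w_bound (e := e) (f := f) he hf hk1 hk
  set C₀ := max (f ^ (-e - 1 / k₁)) (f ^ (-e - 1 / k₂)) with hC₀
  apply MeasureTheory.continuous_of_dominated (bound := fun _ => W * C₀)
  · exact fun β => wq_aesm he hf hk1
  · intro β
    filter_upwards [ae_restrict_mem measurableSet_Ioc] with a ha
    have ha0 : 0 < a := lt_trans hk1 ha.1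
    rw [Real.norm_eq_abs,
      abs_of_nonneg (mul_nonneg (w_pos he hf ha0).le (q_pos hf).le)]
    exact mul_le_mul (hWb a ⟨ha.1.le, ha.2⟩) (q_le he hf hk1 ha.1.le ha.2 hk)
      (q_pos hf).le hW.le
  · exact integrable_const _
  · filter_upwards [ae_restrict_mem measurableSet_Ioc] with a ha
    exact continuous_const.mul (q_cont hf (lt_trans hk1 ha.1))

lemma H_one_le (he : 0 < e) (hf : 0 < f) (hk1 : 0 < k₁) : 1 ≤ H e f k₁ t := by
  have hx : (1:ℝ) ≤ 16 * (1 + (1 + |t|) ^ (4:ℕ) / (2 * f)) := by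
    have h1 : (0:ℝ) ≤ (1 + |t|) ^ (4:ℕ) / (2 * f) := by positivity
    nlinarith
  calc (1:ℝ) = (16 * (1 + (1 + |t|) ^ (4:ℕ) / (2 * f))) ^ (0:ℝ) := (Real.rpow_zero _).symm
    _ ≤ H e f k₁ t := Real.rpow_le_rpow_of_exponent_le hx (by positivity)

lemma H_pos (he : 0 < e) (hf : 0 < f) (hk1 : 0 < k₁) : 0 < H e f k₁ t :=
  lt_of_lt_of_le one_pos (H_one_le he hf hk1)

/-- pointwise ratio bound for `q` -/
lemma q_ratio (he : 0 < e) (hf : 0 < f) (hk1 : 0 < k₁) (hk2 : k₂ ≤ 4)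
    (ha : k₁ ≤ a) (ha2 : a ≤ k₂) :
    q e f a (y + t) ≤ H e f k₁ t * q e f a y := by
  have ha0 : 0 < a := lt_of_lt_of_le hk1 ha
  have ha4 : a ≤ 4 := le_trans ha2 hk2
  set M : ℝ := 16 * (1 + (1 + |t|) ^ (4:ℕ) / (2 * f)) with hM
  have hM1 : (1:ℝ) ≤ M := by
    have h1 : (0:ℝ) ≤ (1 + |t|) ^ (4:ℕ) / (2 * f) := by positivity
    nlinarith
  have hMpos : 0 < M := lt_of_lt_of_le one_pos hM1
  -- |y|^a ≤ 16 * (|y+t|^a + |t|^a)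
  have habs : |y| ≤ 2 * max |y + t| |t| := by
    have h1 : |y| ≤ |y + t| + |t| := by
      calc |y| = |(y + t) + (-t)| := by ring_nf
        _ ≤ |y + t| + |(-t)| := abs_add_le _ _
        _ = |y + t| + |t| := by rw [abs_neg]
    have h2 : |y + t| ≤ max |y + t| |t| := le_max_left _ _
    have h3 : |t| ≤ max |y + t| |t| := le_max_right _ _
    linarith
  have hya : |y| ^ a ≤ 16 * (|y + t| ^ a + |t| ^ a) := by
    have h1 : |y| ^ a ≤ (2 * max |y + t| |t|) ^ a :=
      Real.rpow_le_rpow (abs_nonneg _) habs ha0.le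
    have h2 : (2 * max |y + t| |t|) ^ a = 2 ^ a * (max |y + t| |t|) ^ a :=
      Real.mul_rpow (by norm_num) (le_max_of_le_left (abs_nonneg _))
    have h3 : (2:ℝ) ^ a ≤ 2 ^ (4:ℝ) :=
      Real.rpow_le_rpow_of_exponent_le one_le_two ha4
    have h34 : (2:ℝ) ^ (4:ℝ) = 16 := by
      rw [show ((4:ℝ) = ((4:ℕ):ℝ)) by norm_num, Real.rpow_natCast]; norm_num
    have h4 : (max |y + t| |t|) ^ a ≤ |y + t| ^ a + |t| ^ a := by
      rcases max_cases |y + t| |t| with ⟨hEq, _⟩ | ⟨hEq, _⟩ <;> rw [hEq]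
      · have : (0:ℝ) ≤ |t| ^ a := Real.rpow_nonneg (abs_nonneg _) _
        linarith
      · have : (0:ℝ) ≤ |y + t| ^ a := Real.rpow_nonneg (abs_nonneg _) _
        linarith
    have h5 : (0:ℝ) ≤ (max |y + t| |t|) ^ a :=
      Real.rpow_nonneg (le_max_of_le_left (abs_nonneg _)) _
    calc |y| ^ a ≤ 2 ^ a * (max |y + t| |t|) ^ a := by rw [← h2]; exact h1
      _ ≤ 16 * (max |y + t| |t|) ^ a := by
          have h6 : (0:ℝ) < 2 ^ a := Real.rpow_pos_of_pos (by norm_num) _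
          nlinarith
      _ ≤ 16 * (|y + t| ^ a + |t| ^ a) := by nlinarith
  have hta : |t| ^ a ≤ (1 + |t|) ^ (4:ℕ) := by
    have h1 : |t| ^ a ≤ (1 + |t|) ^ a :=
      Real.rpow_le_rpow (abs_nonneg _) (by linarith [abs_nonneg t]) ha0.le
    have h2 : (1 + |t|) ^ a ≤ (1 + |t|) ^ (4:ℝ) :=
      Real.rpow_le_rpow_of_exponent_le (by linarith [abs_nonneg t]) ha4
    have h3 : ((1 + |t|) : ℝ) ^ (4:ℝ) = (1 + |t|) ^ (4:ℕ) := by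
      rw [show ((4:ℝ) = ((4:ℕ):ℝ)) by norm_num, Real.rpow_natCast]
    exact h1.trans (le_of_le_of_eq h2 h3)
  -- base(y) ≤ M * base(y+t)
  have hbase : |y| ^ a / 2 + f ≤ M * (|y + t| ^ a / 2 + f) := by
    have h1 : (0:ℝ) ≤ |y + t| ^ a := Real.rpow_nonneg (abs_nonneg _) _
    have h2 : 16 * (|t| ^ a / 2) ≤ 16 * ((1 + |t|) ^ (4:ℕ) / (2 * f)) * f := by
      have heq : 16 * ((1 + |t|) ^ (4:ℕ) / (2 * f)) * f = 8 * (1 + |t|) ^ (4:ℕ) := by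
        field_simp; ring
      rw [heq]; linarith
    calc |y| ^ a / 2 + f ≤ 16 * (|y + t| ^ a + |t| ^ a) / 2 + f := by linarith
      _ = 16 * (|y + t| ^ a / 2 + f) + 16 * (|t| ^ a / 2) - 15 * f := by ring
      _ ≤ 16 * (|y + t| ^ a / 2 + f) + 16 * ((1 + |t|) ^ (4:ℕ) / (2 * f)) * f - 15 * f := by
          linarith
      _ ≤ M * (|y + t| ^ a / 2 + f) := by
          have h4 : 16 * ((1 + |t|) ^ (4:ℕ) / (2 * f)) * f
              ≤ 16 * ((1 + |t|) ^ (4:ℕ) / (2 * f)) * (|y + t| ^ a / 2 + f) := by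
            have h5 : (0:ℝ) ≤ 16 * ((1 + |t|) ^ (4:ℕ) / (2 * f)) := by positivity
            nlinarith
          have h6 : (0:ℝ) < |y + t| ^ a / 2 + f := by positivity
          rw [hM]; nlinarith
  -- conclude
  have hbase1 : (0:ℝ) < |y| ^ a / 2 + f := base_pos hf
  have hbase2 : (0:ℝ) < |y + t| ^ a / 2 + f := base_pos hf
  have hdiv : (|y| ^ a / 2 + f) / M ≤ |y + t| ^ a / 2 + f := by
    rw [div_le_iff₀ hMpos]; nlinarith
  have hz : -e - 1 / a ≤ 0 := by
    have : 0 < 1 / a := by positivity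
    linarith
  have h7 : q e f a (y + t) ≤ ((|y| ^ a / 2 + f) / M) ^ (-e - 1 / a) :=
    Real.rpow_le_rpow_of_nonpos (by positivity) hdiv hz
  have h8 : ((|y| ^ a / 2 + f) / M) ^ (-e - 1 / a)
      = M ^ (e + 1 / a) * q e f a y := by
    rw [Real.div_rpow hbase1.le hMpos.le, div_eq_mul_inv, ← Real.rpow_neg hMpos.le]
    rw [q, show (-(-e - 1 / a)) = e + 1 / a by ring]
    ring
  have h9 : M ^ (e + 1 / a) ≤ H e f k₁ t := by
    apply Real.rpow_le_rpow_of_exponent_le hM1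
    have := one_div_le_one_div_of_le hk1 ha
    linarith
  calc q e f a (y + t) ≤ M ^ (e + 1 / a) * q e f a y := by rw [← h8]; exact h7
    _ ≤ H e f k₁ t * q e f a y :=
        mul_le_mul_of_nonneg_right h9 (q_pos hf).le

/-- ratio bound for `g` -/
lemma g_ratio (he : 0 < e) (hf : 0 < f) (hk1 : 0 < k₁) (hk : k₁ < k₂) (hk2 : k₂ ≤ 4) :
    ∀ y t : ℝ, g e f k₁ k₂ (y + t) ≤ H e f k₁ t * g e f k₁ k₂ y := by
  intro y t
  have h1 : g e f k₁ k₂ (y + t) ≤ ∫ a in Ioc k₁ k₂, H e f k₁ t * (w e f a * q e f a y) := by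
    refine setIntegral_mono_on (wq_integrableOn he hf hk1 hk)
      ((wq_integrableOn he hf hk1 hk).const_mul _) measurableSet_Ioc ?_
    intro a ha
    have ha0 : 0 < a := lt_trans hk1 ha.1
    calc w e f a * q e f a (y + t) ≤ w e f a * (H e f k₁ t * q e f a y) :=
          mul_le_mul_of_nonneg_left (q_ratio he hf hk1 hk2 ha.1.le ha.2)
            (w_pos he hf ha0).le
      _ = H e f k₁ t * (w e f a * q e f a y) := by ring
  rw [integral_const_mul] at h1
  exact h1

lemma H_cont (hf : 0 < f) : Continuous (H e f k₁) := by
  have hb : Continuous fun t : ℝ => 16 * (1 + (1 + |t|) ^ (4:ℕ) / (2 * f)) := by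
    continuity
  exact hb.rpow_const fun t => Or.inl (by positivity)

lemma Phi_integrable (he : 0 < e) (hf : 0 < f) (hk1 : 0 < k₁) :
    Integrable (fun t => (1 + |t|) * Real.exp (-t ^ 2 / 2) * H e f k₁ t) := by
  set s' : ℝ := e + 1 / k₁ with hs'
  have hs'pos : 0 < s' := by rw [hs']; positivity
  set K₀ : ℝ := (16 * (1 + 1 / (2 * f))) ^ s' with hK₀
  have hK₀pos : 0 < K₀ := Real.rpow_pos_of_pos (by positivity) _
  set K : ℝ := K₀ * Real.exp ((4 * s' + 1) ^ 2) with hK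
  refine Integrable.mono' (g := fun t => K * Real.exp (-(1/4 : ℝ) * t ^ 2))
    ((integrable_exp_neg_mul_sq (by norm_num : (0:ℝ) < 1/4)).const_mul K) ?_ ?_
  · exact ((continuous_const.add continuous_abs).mul
      (((continuous_pow 2).neg.div_const 2).rexp)).mul (H_cont hf) |>.aestronglyMeasurable
  · refine Filter.Eventually.of_forall fun t => ?_
    obtain ⟨x, hx⟩ : ∃ x : ℝ, x = 1 + |t| := ⟨_, rfl⟩
    have hx1 : (1:ℝ) ≤ x := by rw [hx]; linarith [abs_nonneg t]
    have hx0 : (0:ℝ) < x := lt_of_lt_of_le one_pos hx1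
    have hx4 : (1:ℝ) ≤ x ^ (4:ℕ) := one_le_pow₀ hx1
    have hHb : H e f k₁ t ≤ K₀ * x ^ ((4:ℝ) * s') := by
      have h1 : 16 * (1 + x ^ (4:ℕ) / (2 * f)) ≤ 16 * (1 + 1 / (2 * f)) * x ^ (4:ℕ) := by
        have h2 : (0:ℝ) < 2 * f := by positivity
        have h3 : 1 + x ^ (4:ℕ) / (2 * f) ≤ x ^ (4:ℕ) + x ^ (4:ℕ) / (2 * f) := by linarith
        have h4 : x ^ (4:ℕ) + x ^ (4:ℕ) / (2 * f) = (1 + 1 / (2 * f)) * x ^ (4:ℕ) := by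
          field_simp
        nlinarith [h3, h4]
      have h5 : H e f k₁ t ≤ (16 * (1 + 1 / (2 * f)) * x ^ (4:ℕ)) ^ s' := by
        rw [H, ← hx]
        exact Real.rpow_le_rpow (by positivity) h1 hs'pos.le
      have h6 : (16 * (1 + 1 / (2 * f)) * x ^ (4:ℕ)) ^ s'
          = K₀ * (x ^ (4:ℕ) : ℝ) ^ s' :=
        Real.mul_rpow (by positivity) (by positivity)
      have h7 : ((x ^ (4:ℕ) : ℝ)) ^ s' = x ^ ((4:ℝ) * s') := by
        rw [← Real.rpow_natCast x 4, ← Real.rpow_mul hx0.le]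
        norm_num
      calc H e f k₁ t ≤ (16 * (1 + 1 / (2 * f)) * x ^ (4:ℕ)) ^ s' := h5
        _ = K₀ * x ^ ((4:ℝ) * s') := by rw [h6, h7]
    have hxexp : x ^ ((4:ℝ) * s') ≤ Real.exp (4 * s' * |t|) := by
      rw [Real.rpow_def_of_pos hx0]
      apply Real.exp_le_exp.2
      have hlog : Real.log x ≤ |t| := by
        have := Real.log_le_sub_one_of_pos hx0
        rw [hx] at this ⊢; linarith
      nlinarith [hlog, hs'pos]
    have hxe : x ≤ Real.exp |t| := by
      have := Real.add_one_le_exp |t|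
      rw [hx]; linarith
    have hHpos := H_pos (t := t) he hf hk1
    have key : (1 + |t|) * Real.exp (-t ^ 2 / 2) * H e f k₁ t
        ≤ K * Real.exp (-(1/4 : ℝ) * t ^ 2) := by
      have h8 : (1 + |t|) * Real.exp (-t ^ 2 / 2) * H e f k₁ t
          ≤ Real.exp |t| * Real.exp (-t ^ 2 / 2) * (K₀ * Real.exp (4 * s' * |t|)) := by
        have e1 : (0:ℝ) < Real.exp (-t ^ 2 / 2) := Real.exp_pos _
        have h9 : H e f k₁ t ≤ K₀ * Real.exp (4 * s' * |t|) :=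
          hHb.trans (mul_le_mul_of_nonneg_left hxexp hK₀pos.le)
        have h10 : (0:ℝ) ≤ (1 + |t|) * Real.exp (-t ^ 2 / 2) := by positivity
        calc (1 + |t|) * Real.exp (-t ^ 2 / 2) * H e f k₁ t
            ≤ (1 + |t|) * Real.exp (-t ^ 2 / 2) * (K₀ * Real.exp (4 * s' * |t|)) :=
              mul_le_mul_of_nonneg_left h9 h10
          _ ≤ Real.exp |t| * Real.exp (-t ^ 2 / 2) * (K₀ * Real.exp (4 * s' * |t|)) := by
              have h11 : (0:ℝ) ≤ K₀ * Real.exp (4 * s' * |t|) := by positivity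
              have h11b := hxe
              rw [hx] at h11b
              exact mul_le_mul_of_nonneg_right
                (mul_le_mul_of_nonneg_right h11b (Real.exp_pos _).le) h11
      have h12 : Real.exp |t| * Real.exp (-t ^ 2 / 2) * (K₀ * Real.exp (4 * s' * |t|))
          = K₀ * Real.exp (|t| + (-t ^ 2 / 2) + 4 * s' * |t|) := by
        rw [Real.exp_add, Real.exp_add]; ring
      have h13 : |t| + (-t ^ 2 / 2) + 4 * s' * |t| ≤ (4 * s' + 1) ^ 2 + (-(1/4 : ℝ) * t ^ 2) := by
        nlinarith [sq_nonneg (|t| / 2 - (4 * s' + 1)), sq_abs t]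
      have h14 : K₀ * Real.exp (|t| + (-t ^ 2 / 2) + 4 * s' * |t|)
          ≤ K₀ * Real.exp ((4 * s' + 1) ^ 2 + (-(1/4 : ℝ) * t ^ 2)) :=
        mul_le_mul_of_nonneg_left (Real.exp_le_exp.2 h13) hK₀pos.le
      have h15 : K₀ * Real.exp ((4 * s' + 1) ^ 2 + (-(1/4 : ℝ) * t ^ 2))
          = K * Real.exp (-(1/4 : ℝ) * t ^ 2) := by
        rw [Real.exp_add, hK]; ring
      calc (1 + |t|) * Real.exp (-t ^ 2 / 2) * H e f k₁ t
          ≤ Real.exp |t| * Real.exp (-t ^ 2 / 2) * (K₀ * Real.exp (4 * s' * |t|)) := h8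
        _ = K₀ * Real.exp (|t| + (-t ^ 2 / 2) + 4 * s' * |t|) := h12
        _ ≤ K₀ * Real.exp ((4 * s' + 1) ^ 2 + (-(1/4 : ℝ) * t ^ 2)) := h14
        _ = K * Real.exp (-(1/4 : ℝ) * t ^ 2) := h15
    have hn : (0:ℝ) ≤ (1 + |t|) * Real.exp (-t ^ 2 / 2) * H e f k₁ t := by positivity
    rw [Real.norm_eq_abs, abs_of_nonneg hn]
    exact key

/-- squeeze for `q` for large `y` -/
lemma q_squeeze (he : 0 < e) (hf : 0 < f) (hk1 : 0 < k₁) (hk2 : k₂ ≤ 4)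
    (ha : k₁ ≤ a) (ha2 : a ≤ k₂) (hy1 : 1 ≤ y) (hy2 : 2 * |t| + 1 ≤ y) :
    ((1 + |t| / y) ^ (4:ℕ) : ℝ) ^ (-(e + 1 / k₁)) * q e f a y ≤ q e f a (y + t) ∧
      q e f a (y + t) ≤ ((1 - |t| / y) ^ (4:ℕ) : ℝ) ^ (-(e + 1 / k₁)) * q e f a y := by
  have ha0 : 0 < a := lt_of_lt_of_le hk1 ha
  have ha4 : a ≤ 4 := le_trans ha2 hk2
  have hy0 : 0 < y := lt_of_lt_of_le one_pos hy1
  set δ : ℝ := |t| / y with hδ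
  have hδ0 : 0 ≤ δ := by positivity
  have hδhalf : δ ≤ 1 / 2 := by
    rw [hδ, div_le_iff₀ hy0]; linarith
  have h1δ : 0 < 1 - δ := by linarith
  have h1δ' : 1 - δ ≤ 1 := by linarith
  have h2δ : 1 ≤ 1 + δ := by linarith
  -- |y + t| bounds
  have hytl : y * (1 - δ) ≤ |y + t| := by
    have h1 : y - |t| ≤ y + t := by
      have := neg_abs_le t; linarith
    have h2 : y * (1 - δ) = y - |t| := by
      rw [hδ]; field_simp
    have h3 : 0 ≤ y + t := by
      have := neg_abs_le t; linarith
    rw [abs_of_nonneg h3, h2]; linarith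
  have hytu : |y + t| ≤ y * (1 + δ) := by
    have h2 : y * (1 + δ) = y + |t| := by
      rw [hδ]; field_simp
    have := abs_add_le y t
    rw [abs_of_pos hy0] at this
    rw [h2]; linarith [le_abs_self t, this]
  -- rpow bounds
  have hyabs : |y| = y := abs_of_pos hy0
  have hcl : ((1 - δ) ^ (4:ℕ) : ℝ) * (|y| ^ a / 2 + f) ≤ |y + t| ^ a / 2 + f := by
    have h1 : (y * (1 - δ)) ^ a ≤ |y + t| ^ a :=
      Real.rpow_le_rpow (by positivity) hytl (le_of_lt ha0)
    have h2 : (y * (1 - δ)) ^ a = y ^ a * (1 - δ) ^ a :=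
      Real.mul_rpow hy0.le h1δ.le
    have h3 : ((1 - δ) ^ (4:ℕ) : ℝ) ≤ (1 - δ) ^ a := by
      have h4 : ((1 - δ) : ℝ) ^ ((4:ℕ) : ℝ) ≤ (1 - δ) ^ a :=
        Real.rpow_le_rpow_of_exponent_ge h1δ h1δ' (by norm_num; exact ha4)
      rwa [Real.rpow_natCast] at h4
    have h5 : (0:ℝ) ≤ y ^ a := Real.rpow_nonneg hy0.le _
    have hc1 : ((1 - δ) ^ (4:ℕ) : ℝ) ≤ 1 := by
      apply pow_le_one₀ h1δ.le h1δ'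
    rw [hyabs]
    nlinarith [h1, h2, h3, h5, hc1]
  have hcu : |y + t| ^ a / 2 + f ≤ ((1 + δ) ^ (4:ℕ) : ℝ) * (|y| ^ a / 2 + f) := by
    have h1 : |y + t| ^ a ≤ (y * (1 + δ)) ^ a :=
      Real.rpow_le_rpow (abs_nonneg _) hytu (le_of_lt ha0)
    have h2 : (y * (1 + δ)) ^ a = y ^ a * (1 + δ) ^ a :=
      Real.mul_rpow hy0.le (by linarith)
    have h3 : ((1 + δ) : ℝ) ^ a ≤ (1 + δ) ^ (4:ℕ) := by
      have h4 : ((1 + δ) : ℝ) ^ a ≤ (1 + δ) ^ ((4:ℕ) : ℝ) :=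
        Real.rpow_le_rpow_of_exponent_le h2δ (by norm_num; exact ha4)
      rwa [Real.rpow_natCast] at h4
    have h5 : (0:ℝ) ≤ y ^ a := Real.rpow_nonneg hy0.le _
    have hc2 : (1:ℝ) ≤ (1 + δ) ^ (4:ℕ) := one_le_pow₀ h2δ
    rw [hyabs]
    nlinarith [h1, h2, h3, h5, hc2]
  -- exponent facts
  have hz : -e - 1 / a ≤ 0 := by
    have h0 : 0 < 1 / a := by positivity
    linarith
  have hsle : e + 1 / a ≤ e + 1 / k₁ := by
    have := one_div_le_one_div_of_le hk1 ha; linarith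
  have hbpos : (0:ℝ) < |y| ^ a / 2 + f := base_pos hf
  have hbpos' : (0:ℝ) < |y + t| ^ a / 2 + f := base_pos hf
  have hc1pos : (0:ℝ) < ((1 - δ) ^ (4:ℕ) : ℝ) := by positivity
  have hc2pos : (0:ℝ) < ((1 + δ) ^ (4:ℕ) : ℝ) := by positivity
  constructor
  · -- lower bound
    have h1 : q e f a (y + t) ≥ (((1 + δ) ^ (4:ℕ) : ℝ) * (|y| ^ a / 2 + f)) ^ (-e - 1 / a) :=
      Real.rpow_le_rpow_of_nonpos hbpos' hcu hz
    have h2 : (((1 + δ) ^ (4:ℕ) : ℝ) * (|y| ^ a / 2 + f)) ^ (-e - 1 / a)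
        = (((1 + δ) ^ (4:ℕ) : ℝ)) ^ (-e - 1 / a) * q e f a y :=
      Real.mul_rpow hc2pos.le hbpos.le
    have h3 : (((1 + δ) ^ (4:ℕ) : ℝ)) ^ (-(e + 1 / k₁))
        ≤ (((1 + δ) ^ (4:ℕ) : ℝ)) ^ (-e - 1 / a) := by
      apply Real.rpow_le_rpow_of_exponent_le (one_le_pow₀ h2δ)
      linarith
    calc (((1 + δ) ^ (4:ℕ) : ℝ)) ^ (-(e + 1 / k₁)) * q e f a y
        ≤ (((1 + δ) ^ (4:ℕ) : ℝ)) ^ (-e - 1 / a) * q e f a y :=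
          mul_le_mul_of_nonneg_right h3 (q_pos hf).le
      _ = (((1 + δ) ^ (4:ℕ) : ℝ) * (|y| ^ a / 2 + f)) ^ (-e - 1 / a) := h2.symm
      _ ≤ q e f a (y + t) := h1
  · -- upper bound
    have h1 : q e f a (y + t) ≤ (((1 - δ) ^ (4:ℕ) : ℝ) * (|y| ^ a / 2 + f)) ^ (-e - 1 / a) :=
      Real.rpow_le_rpow_of_nonpos (by positivity) hcl hz
    have h2 : (((1 - δ) ^ (4:ℕ) : ℝ) * (|y| ^ a / 2 + f)) ^ (-e - 1 / a)
        = (((1 - δ) ^ (4:ℕ) : ℝ)) ^ (-e - 1 / a) * q e f a y :=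
      Real.mul_rpow hc1pos.le hbpos.le
    have h3 : (((1 - δ) ^ (4:ℕ) : ℝ)) ^ (-e - 1 / a)
        ≤ (((1 - δ) ^ (4:ℕ) : ℝ)) ^ (-(e + 1 / k₁)) := by
      apply Real.rpow_le_rpow_of_exponent_ge hc1pos (pow_le_one₀ h1δ.le h1δ')
      linarith
    calc q e f a (y + t)
        ≤ (((1 - δ) ^ (4:ℕ) : ℝ)) ^ (-e - 1 / a) * q e f a y := by rw [← h2]; exact h1
      _ ≤ (((1 - δ) ^ (4:ℕ) : ℝ)) ^ (-(e + 1 / k₁)) * q e f a y :=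
          mul_le_mul_of_nonneg_right h3 (q_pos hf).le

/-- the main limit: ratio of shifted `g` tends to 1 -/
lemma g_ratio_tendsto (he : 0 < e) (hf : 0 < f) (hk1 : 0 < k₁) (hk : k₁ < k₂)
    (hk2 : k₂ ≤ 4) (t : ℝ) :
    Tendsto (fun y => g e f k₁ k₂ (y + t) / g e f k₁ k₂ y) atTop (𝓝 1) := by
  have hδten : Tendsto (fun y : ℝ => |t| / y) atTop (𝓝 0) :=
    tendsto_const_nhds.div_atTop tendsto_id
  have hcontU : ContinuousAt (fun δ : ℝ => (((1 - δ) ^ (4:ℕ) : ℝ)) ^ (-(e + 1 / k₁))) 0 := by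
    apply ContinuousAt.rpow_const
    · exact ((continuous_const.sub continuous_id).pow 4).continuousAt
    · left; norm_num
  have hcontL : ContinuousAt (fun δ : ℝ => (((1 + δ) ^ (4:ℕ) : ℝ)) ^ (-(e + 1 / k₁))) 0 := by
    apply ContinuousAt.rpow_const
    · exact ((continuous_const.add continuous_id).pow 4).continuousAt
    · left; norm_num
  have hU : Tendsto (fun y : ℝ => (((1 - |t| / y) ^ (4:ℕ) : ℝ)) ^ (-(e + 1 / k₁)))
      atTop (𝓝 1) := by
    have h1 := (hcontU.tendsto).comp hδten
    simpa [Function.comp_def] using h1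
  have hL : Tendsto (fun y : ℝ => (((1 + |t| / y) ^ (4:ℕ) : ℝ)) ^ (-(e + 1 / k₁)))
      atTop (𝓝 1) := by
    have h1 := (hcontL.tendsto).comp hδten
    simpa [Function.comp_def] using h1
  apply tendsto_of_tendsto_of_tendsto_of_le_of_le' hL hU
  · filter_upwards [eventually_ge_atTop (max 1 (2 * |t| + 1))] with y hy
    have hy1 : 1 ≤ y := le_trans (le_max_left _ _) hy
    have hy2 : 2 * |t| + 1 ≤ y := le_trans (le_max_right _ _) hy
    have hgy := g_pos (β := y) he hf hk1 hk
    rw [le_div_iff₀ hgy]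
    have h1 : ∀ b ∈ Ioc k₁ k₂,
        (((1 + |t| / y) ^ (4:ℕ) : ℝ)) ^ (-(e + 1 / k₁)) * (w e f b * q e f b y)
          ≤ w e f b * q e f b (y + t) := by
      intro b hb
      have hb0 : 0 < b := lt_trans hk1 hb.1
      have := (q_squeeze (a := b) (y := y) (t := t) he hf hk1 hk2 hb.1.le hb.2 hy1 hy2).1
      calc (((1 + |t| / y) ^ (4:ℕ) : ℝ)) ^ (-(e + 1 / k₁)) * (w e f b * q e f b y)
          = w e f b * ((((1 + |t| / y) ^ (4:ℕ) : ℝ)) ^ (-(e + 1 / k₁)) * q e f b y) := by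
            ring
        _ ≤ w e f b * q e f b (y + t) :=
            mul_le_mul_of_nonneg_left this (w_pos he hf hb0).le
    have h2 : (((1 + |t| / y) ^ (4:ℕ) : ℝ)) ^ (-(e + 1 / k₁)) * g e f k₁ k₂ y
        = ∫ b in Ioc k₁ k₂,
            (((1 + |t| / y) ^ (4:ℕ) : ℝ)) ^ (-(e + 1 / k₁)) * (w e f b * q e f b y) := by
      rw [integral_const_mul, g]
    rw [h2]
    exact setIntegral_mono_on ((wq_integrableOn he hf hk1 hk).const_mul _)
      (wq_integrableOn he hf hk1 hk) measurableSet_Ioc h1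
  · filter_upwards [eventually_ge_atTop (max 1 (2 * |t| + 1))] with y hy
    have hy1 : 1 ≤ y := le_trans (le_max_left _ _) hy
    have hy2 : 2 * |t| + 1 ≤ y := le_trans (le_max_right _ _) hy
    have hgy := g_pos (β := y) he hf hk1 hk
    rw [div_le_iff₀ hgy]
    have h1 : ∀ b ∈ Ioc k₁ k₂,
        w e f b * q e f b (y + t)
          ≤ (((1 - |t| / y) ^ (4:ℕ) : ℝ)) ^ (-(e + 1 / k₁)) * (w e f b * q e f b y) := by
      intro b hb
      have hb0 : 0 < b := lt_trans hk1 hb.1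
      have := (q_squeeze (a := b) (y := y) (t := t) he hf hk1 hk2 hb.1.le hb.2 hy1 hy2).2
      calc w e f b * q e f b (y + t)
          ≤ w e f b * ((((1 - |t| / y) ^ (4:ℕ) : ℝ)) ^ (-(e + 1 / k₁)) * q e f b y) :=
            mul_le_mul_of_nonneg_left this (w_pos he hf hb0).le
        _ = (((1 - |t| / y) ^ (4:ℕ) : ℝ)) ^ (-(e + 1 / k₁)) * (w e f b * q e f b y) := by
            ring
    have h2 : (((1 - |t| / y) ^ (4:ℕ) : ℝ)) ^ (-(e + 1 / k₁)) * g e f k₁ k₂ y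
        = ∫ b in Ioc k₁ k₂,
            (((1 - |t| / y) ^ (4:ℕ) : ℝ)) ^ (-(e + 1 / k₁)) * (w e f b * q e f b y) := by
      rw [integral_const_mul, g]
    rw [h2]
    exact setIntegral_mono_on (wq_integrableOn he hf hk1 hk)
      ((wq_integrableOn he hf hk1 hk).const_mul _) measurableSet_Ioc h1

noncomputable def Mf (e f k₁ k₂ y : ℝ) : ℝ :=
  ∫ β : ℝ, Real.exp (-(β - y) ^ 2 / 2) * g e f k₁ k₂ β

noncomputable def Af (e f k₁ k₂ y : ℝ) : ℝ :=
  ∫ β : ℝ, Real.exp (-(β - y) ^ 2 / 2) * (β - y) * g e f k₁ k₂ β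

lemma gauss_comp_int (c y : ℝ) (hc : 0 < c) :
    Integrable fun β : ℝ => Real.exp (-c * (β - y) ^ 2) :=
  (integrable_exp_neg_mul_sq hc).comp_sub_right y

lemma gauss_eq (y : ℝ) :
    (fun β : ℝ => Real.exp (-(β - y) ^ 2 / 2)) =
      fun β : ℝ => Real.exp (-(1/2 : ℝ) * (β - y) ^ 2) := by
  funext β; congr 1; ring

lemma gauss_int (y : ℝ) : Integrable fun β : ℝ => Real.exp (-(β - y) ^ 2 / 2) := by
  rw [gauss_eq]; exact gauss_comp_int _ y (by norm_num)

lemma poly_gauss_le (u : ℝ) :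
    (|u| + 1) * Real.exp (-u ^ 2 / 2) ≤ Real.exp 2 * Real.exp (-(1/4 : ℝ) * u ^ 2) := by
  have h1 : |u| + 1 ≤ Real.exp |u| := by
    have := Real.add_one_le_exp |u|; linarith
  have h2 : (|u| + 1) * Real.exp (-u ^ 2 / 2) ≤ Real.exp |u| * Real.exp (-u ^ 2 / 2) :=
    mul_le_mul_of_nonneg_right h1 (Real.exp_pos _).le
  have h3 : Real.exp |u| * Real.exp (-u ^ 2 / 2) = Real.exp (|u| + (-u ^ 2 / 2)) :=
    (Real.exp_add _ _).symm
  have h4 : |u| + (-u ^ 2 / 2) ≤ 2 + (-(1/4 : ℝ) * u ^ 2) := by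
    nlinarith [sq_nonneg (|u| - 2), sq_abs u]
  calc (|u| + 1) * Real.exp (-u ^ 2 / 2) ≤ Real.exp (|u| + (-u ^ 2 / 2)) := by
        rw [← h3]; exact h2
    _ ≤ Real.exp (2 + (-(1/4 : ℝ) * u ^ 2)) := Real.exp_le_exp.2 h4
    _ = Real.exp 2 * Real.exp (-(1/4 : ℝ) * u ^ 2) := Real.exp_add _ _

lemma Mf_integrand_int (he : 0 < e) (hf : 0 < f) (hk1 : 0 < k₁) (hk : k₁ < k₂) (y : ℝ) :
    Integrable fun β : ℝ => Real.exp (-(β - y) ^ 2 / 2) * g e f k₁ k₂ β := by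
  obtain ⟨B, hB, hBb⟩ := g_bdd (e := e) (f := f) (k₁ := k₁) (k₂ := k₂) he hf hk1 hk
  refine Integrable.mono' (g := fun β => B * Real.exp (-(β - y) ^ 2 / 2))
    ((gauss_int y).const_mul B) ?_ ?_
  · exact ((Continuous.mul (by continuity) (g_cont he hf hk1 hk)).aestronglyMeasurable)
  · refine Filter.Eventually.of_forall fun β => ?_
    have h0 : 0 < g e f k₁ k₂ β := g_pos he hf hk1 hk
    have h1 : (0:ℝ) < Real.exp (-(β - y) ^ 2 / 2) := Real.exp_pos _
    rw [Real.norm_eq_abs, abs_of_nonneg (by positivity)]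
    calc Real.exp (-(β - y) ^ 2 / 2) * g e f k₁ k₂ β
        ≤ Real.exp (-(β - y) ^ 2 / 2) * B := mul_le_mul_of_nonneg_left (hBb β) h1.le
      _ = B * Real.exp (-(β - y) ^ 2 / 2) := mul_comm _ _

lemma Af_integrand_int (he : 0 < e) (hf : 0 < f) (hk1 : 0 < k₁) (hk : k₁ < k₂) (y : ℝ) :
    Integrable fun β : ℝ => Real.exp (-(β - y) ^ 2 / 2) * (β - y) * g e f k₁ k₂ β := by
  obtain ⟨B, hB, hBb⟩ := g_bdd (e := e) (f := f) (k₁ := k₁) (k₂ := k₂) he hf hk1 hk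
  refine Integrable.mono'
    (g := fun β => B * Real.exp 2 * Real.exp (-(1/4 : ℝ) * (β - y) ^ 2))
    (((gauss_comp_int (1/4) y (by norm_num)).const_mul _)) ?_ ?_
  · exact ((Continuous.mul (by continuity) (g_cont he hf hk1 hk)).aestronglyMeasurable)
  · refine Filter.Eventually.of_forall fun β => ?_
    have h0 : 0 < g e f k₁ k₂ β := g_pos he hf hk1 hk
    have h1 : (0:ℝ) < Real.exp (-(β - y) ^ 2 / 2) := Real.exp_pos _
    rw [Real.norm_eq_abs, abs_mul, abs_mul, abs_of_pos h1, abs_of_pos h0]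
    have h2 : Real.exp (-(β - y) ^ 2 / 2) * |β - y| ≤
        Real.exp 2 * Real.exp (-(1/4 : ℝ) * (β - y) ^ 2) := by
      have := poly_gauss_le (β - y)
      nlinarith [Real.exp_pos (-(β - y) ^ 2 / 2), abs_nonneg (β - y)]
    calc Real.exp (-(β - y) ^ 2 / 2) * |β - y| * g e f k₁ k₂ β
        ≤ (Real.exp 2 * Real.exp (-(1/4 : ℝ) * (β - y) ^ 2)) * B := by
          apply mul_le_mul h2 (hBb β) h0.le (by positivity)
      _ = B * Real.exp 2 * Real.exp (-(1/4 : ℝ) * (β - y) ^ 2) := by ring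

lemma Mf_shift (y : ℝ) :
    Mf e f k₁ k₂ y = ∫ t : ℝ, Real.exp (-t ^ 2 / 2) * g e f k₁ k₂ (y + t) := by
  rw [Mf, ← integral_add_left_eq_self
    (fun β : ℝ => Real.exp (-(β - y) ^ 2 / 2) * g e f k₁ k₂ β) y]
  congr 1; funext t; simp [add_sub_cancel_left]

lemma Af_shift (y : ℝ) :
    Af e f k₁ k₂ y = ∫ t : ℝ, Real.exp (-t ^ 2 / 2) * t * g e f k₁ k₂ (y + t) := by
  rw [Af, ← integral_add_left_eq_self
    (fun β : ℝ => Real.exp (-(β - y) ^ 2 / 2) * (β - y) * g e f k₁ k₂ β) y]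
  congr 1; funext t; simp [add_sub_cancel_left]

lemma Mf_hasDeriv (he : 0 < e) (hf : 0 < f) (hk1 : 0 < k₁) (hk : k₁ < k₂) (y₀ : ℝ) :
    HasDerivAt (Mf e f k₁ k₂) (Af e f k₁ k₂ y₀) y₀ := by
  obtain ⟨B, hB, hBb⟩ := g_bdd (e := e) (f := f) (k₁ := k₁) (k₂ := k₂) he hf hk1 hk
  have key := hasDerivAt_integral_of_dominated_loc_of_deriv_le
    (F := fun x β => Real.exp (-(β - x) ^ 2 / 2) * g e f k₁ k₂ β)
    (F' := fun x β => Real.exp (-(β - x) ^ 2 / 2) * (β - x) * g e f k₁ k₂ β)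
    (x₀ := y₀) (s := Metric.ball y₀ 1) (μ := volume)
    (bound := fun β => B * Real.exp 2 * Real.exp (1/4 : ℝ) *
      Real.exp (-(1/8 : ℝ) * (β - y₀) ^ 2))
    (Metric.ball_mem_nhds y₀ one_pos) ?_ ?_ ?_ ?_ ?_ ?_
  · exact key.2
  · exact Filter.Eventually.of_forall fun x =>
      ((Continuous.mul (by continuity) (g_cont he hf hk1 hk)).aestronglyMeasurable)
  · exact Mf_integrand_int he hf hk1 hk y₀
  · exact ((Continuous.mul (by continuity) (g_cont he hf hk1 hk)).aestronglyMeasurable)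
  · refine Filter.Eventually.of_forall fun β => fun x hx => ?_
    have h0 : 0 < g e f k₁ k₂ β := g_pos he hf hk1 hk
    have h1 : (0:ℝ) < Real.exp (-(β - x) ^ 2 / 2) := Real.exp_pos _
    rw [Real.norm_eq_abs, abs_mul, abs_mul, abs_of_pos h1, abs_of_pos h0]
    have hxy : |x - y₀| < 1 := by
      have := mem_ball_iff_norm.1 hx; rwa [Real.norm_eq_abs] at this
    have hsq : (β - y₀) ^ 2 / 2 - 1 ≤ (β - x) ^ 2 := by
      nlinarith [sq_nonneg ((β - x) + (x - y₀)), sq_nonneg ((β - x) - (x - y₀)),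
        sq_nonneg (x - y₀), abs_nonneg (x - y₀), sq_abs (x - y₀),
        (abs_lt.1 hxy).1, (abs_lt.1 hxy).2]
    have h2 : Real.exp (-(β - x) ^ 2 / 2) * |β - x| ≤
        Real.exp 2 * Real.exp (-(1/4 : ℝ) * (β - x) ^ 2) := by
      have := poly_gauss_le (β - x)
      nlinarith [Real.exp_pos (-(β - x) ^ 2 / 2), abs_nonneg (β - x)]
    have h3 : Real.exp (-(1/4 : ℝ) * (β - x) ^ 2) ≤
        Real.exp (1/4 : ℝ) * Real.exp (-(1/8 : ℝ) * (β - y₀) ^ 2) := by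
      rw [← Real.exp_add]
      apply Real.exp_le_exp.2
      nlinarith [hsq]
    calc Real.exp (-(β - x) ^ 2 / 2) * |β - x| * g e f k₁ k₂ β
        ≤ (Real.exp 2 * Real.exp (-(1/4 : ℝ) * (β - x) ^ 2)) * B :=
          mul_le_mul h2 (hBb β) h0.le (by positivity)
      _ ≤ (Real.exp 2 * (Real.exp (1/4 : ℝ) * Real.exp (-(1/8 : ℝ) * (β - y₀) ^ 2))) * B := by
          exact mul_le_mul_of_nonneg_right
            (mul_le_mul_of_nonneg_left h3 (Real.exp_pos 2).le) hB.le
      _ = B * Real.exp 2 * Real.exp (1/4 : ℝ) * Real.exp (-(1/8 : ℝ) * (β - y₀) ^ 2) := by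
          ring
  · exact ((gauss_comp_int (1/8) y₀ (by norm_num)).const_mul _)
  · refine Filter.Eventually.of_forall fun β => fun x hx => ?_
    have h1 : HasDerivAt (fun x : ℝ => β - x) (-1) x := (hasDerivAt_id x).const_sub β
    have h2 := ((h1.pow 2).neg.div_const 2).exp
    have h3 := h2.mul_const (g e f k₁ k₂ β)
    convert h3 using 1
    · rfl
    · rfl
    · simp only [Pi.pow_apply, Pi.neg_apply, Nat.cast_ofNat, show (2:ℕ) - 1 = 1 from rfl, pow_one]
      ring

lemma Mf_shift_int (he : 0 < e) (hf : 0 < f) (hk1 : 0 < k₁) (hk : k₁ < k₂) (y : ℝ) :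
    Integrable fun t : ℝ => Real.exp (-t ^ 2 / 2) * g e f k₁ k₂ (y + t) := by
  have h := (Mf_integrand_int he hf hk1 hk y).comp_add_left y
  simpa [add_sub_cancel_left] using h

lemma Af_shift_int (he : 0 < e) (hf : 0 < f) (hk1 : 0 < k₁) (hk : k₁ < k₂) (y : ℝ) :
    Integrable fun t : ℝ => Real.exp (-t ^ 2 / 2) * t * g e f k₁ k₂ (y + t) := by
  have h := (Af_integrand_int he hf hk1 hk y).comp_add_left y
  simpa [add_sub_cancel_left] using h

lemma H_neg : H e f k₁ (-t) = H e f k₁ t := by simp [H]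

lemma g_ratio' (he : 0 < e) (hf : 0 < f) (hk1 : 0 < k₁) (hk : k₁ < k₂) (hk2 : k₂ ≤ 4)
    (y t : ℝ) : g e f k₁ k₂ y / H e f k₁ t ≤ g e f k₁ k₂ (y + t) := by
  have h1 := g_ratio he hf hk1 hk hk2 (y + t) (-t)
  rw [add_neg_cancel_right, H_neg] at h1
  rw [div_le_iff₀ (H_pos he hf hk1)]
  linarith [h1]

lemma H_mono (he : 0 < e) (hf : 0 < f) (hk1 : 0 < k₁) (hts : |t| ≤ 1) :
    H e f k₁ t ≤ H e f k₁ 1 := by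
  have h1 : ((1 + |t|) ^ (4:ℕ) : ℝ) ≤ (1 + |(1:ℝ)|) ^ (4:ℕ) := by
    apply pow_le_pow_left₀ (by positivity)
    rw [abs_one]; linarith
  have h2 : ((1 + |t|) ^ (4:ℕ) : ℝ) / (2 * f) ≤ ((1 + |(1:ℝ)|) ^ (4:ℕ) : ℝ) / (2 * f) := by
    gcongr
  exact Real.rpow_le_rpow (by positivity) (by linarith) (by positivity)

lemma Af_bound (he : 0 < e) (hf : 0 < f) (hk1 : 0 < k₁) (hk : k₁ < k₂) (hk2 : k₂ ≤ 4)
    (y : ℝ) :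
    |Af e f k₁ k₂ y| ≤
      (∫ t : ℝ, (1 + |t|) * Real.exp (-t ^ 2 / 2) * H e f k₁ t) * g e f k₁ k₂ y := by
  rw [Af_shift]
  have hgy := g_pos (β := y) he hf hk1 hk
  calc |∫ t : ℝ, Real.exp (-t ^ 2 / 2) * t * g e f k₁ k₂ (y + t)|
      ≤ ∫ t : ℝ, |Real.exp (-t ^ 2 / 2) * t * g e f k₁ k₂ (y + t)| := by
        simpa only [Real.norm_eq_abs] using norm_integral_le_integral_norm (μ := volume)
          (fun t : ℝ => Real.exp (-t ^ 2 / 2) * t * g e f k₁ k₂ (y + t))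
    _ ≤ ∫ t : ℝ, ((1 + |t|) * Real.exp (-t ^ 2 / 2) * H e f k₁ t) * g e f k₁ k₂ y := by
        apply integral_mono (Af_shift_int he hf hk1 hk y).abs
          ((Phi_integrable he hf hk1).mul_const _)
        intro t
        dsimp only
        have h0 : 0 < g e f k₁ k₂ (y + t) := g_pos he hf hk1 hk
        have h1 : (0:ℝ) < Real.exp (-t ^ 2 / 2) := Real.exp_pos _
        rw [abs_mul, abs_mul, abs_of_pos h1, abs_of_pos h0]
        have h2 : g e f k₁ k₂ (y + t) ≤ H e f k₁ t * g e f k₁ k₂ y :=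
          g_ratio he hf hk1 hk hk2 y t
        have hH := H_pos (t := t) he hf hk1
        have h3 : Real.exp (-t ^ 2 / 2) * |t| ≤ (1 + |t|) * Real.exp (-t ^ 2 / 2) := by
          nlinarith [abs_nonneg t, h1]
        calc Real.exp (-t ^ 2 / 2) * |t| * g e f k₁ k₂ (y + t)
            ≤ Real.exp (-t ^ 2 / 2) * |t| * (H e f k₁ t * g e f k₁ k₂ y) :=
              mul_le_mul_of_nonneg_left h2 (by positivity)
          _ ≤ (1 + |t|) * Real.exp (-t ^ 2 / 2) * (H e f k₁ t * g e f k₁ k₂ y) :=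
              mul_le_mul_of_nonneg_right h3 (mul_nonneg hH.le hgy.le)
          _ = (1 + |t|) * Real.exp (-t ^ 2 / 2) * H e f k₁ t * g e f k₁ k₂ y := by ring
    _ = (∫ t : ℝ, (1 + |t|) * Real.exp (-t ^ 2 / 2) * H e f k₁ t) * g e f k₁ k₂ y := by
        rw [integral_mul_const]

lemma Mf_lower (he : 0 < e) (hf : 0 < f) (hk1 : 0 < k₁) (hk : k₁ < k₂) (hk2 : k₂ ≤ 4)
    (y : ℝ) :
    2 * Real.exp (-(1:ℝ)/2) / H e f k₁ 1 * g e f k₁ k₂ y ≤ Mf e f k₁ k₂ y := by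
  have hgy := g_pos (β := y) he hf hk1 hk
  have hH1 := H_pos (t := (1:ℝ)) he hf hk1
  rw [Mf_shift]
  have h2 : ∀ t ∈ Icc (-1:ℝ) 1,
      Real.exp (-(1:ℝ)/2) * (g e f k₁ k₂ y / H e f k₁ 1)
        ≤ Real.exp (-t ^ 2 / 2) * g e f k₁ k₂ (y + t) := by
    intro t ht
    have hts : |t| ≤ 1 := abs_le.2 ⟨ht.1, ht.2⟩
    have h3 : Real.exp (-(1:ℝ)/2) ≤ Real.exp (-t ^ 2 / 2) := by
      apply Real.exp_le_exp.2
      nlinarith [sq_abs t, abs_nonneg t]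
    have h4 : g e f k₁ k₂ y / H e f k₁ 1 ≤ g e f k₁ k₂ (y + t) := by
      have h5 : g e f k₁ k₂ y / H e f k₁ 1 ≤ g e f k₁ k₂ y / H e f k₁ t :=
        div_le_div_of_nonneg_left hgy.le (H_pos he hf hk1) (H_mono he hf hk1 hts)
      exact h5.trans (g_ratio' he hf hk1 hk hk2 y t)
    exact mul_le_mul h3 h4 (by positivity) (Real.exp_pos _).le
  have h6 : ∫ t in Icc (-1:ℝ) 1, Real.exp (-(1:ℝ)/2) * (g e f k₁ k₂ y / H e f k₁ 1)
      ≤ ∫ t in Icc (-1:ℝ) 1, Real.exp (-t ^ 2 / 2) * g e f k₁ k₂ (y + t) :=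
    setIntegral_mono_on (integrableOn_const measure_Icc_lt_top.ne)
      (Mf_shift_int he hf hk1 hk y).integrableOn measurableSet_Icc h2
  have h7 : ∫ t in Icc (-1:ℝ) 1, Real.exp (-t ^ 2 / 2) * g e f k₁ k₂ (y + t)
      ≤ ∫ t : ℝ, Real.exp (-t ^ 2 / 2) * g e f k₁ k₂ (y + t) := by
    apply setIntegral_le_integral (Mf_shift_int he hf hk1 hk y)
    filter_upwards with t
    have := g_pos (β := y + t) (k₂ := k₂) he hf hk1 hk
    positivity
  have h8 : ∫ t in Icc (-1:ℝ) 1, Real.exp (-(1:ℝ)/2) * (g e f k₁ k₂ y / H e f k₁ 1)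
      = 2 * Real.exp (-(1:ℝ)/2) / H e f k₁ 1 * g e f k₁ k₂ y := by
    rw [setIntegral_const, Real.volume_real_Icc_of_le (by norm_num)]
    rw [show (1:ℝ) - (-1) = 2 by norm_num]
    rw [smul_eq_mul]; ring
  linarith [h6, h7, h8 ▸ h6]

lemma gauss_total_pos : 0 < ∫ t : ℝ, Real.exp (-t ^ 2 / 2) := by
  have h : (fun t : ℝ => Real.exp (-t ^ 2 / 2)) =
      fun t : ℝ => Real.exp (-(1/2 : ℝ) * t ^ 2) := by
    funext t; congr 1; ring
  rw [h, integral_gaussian]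
  apply Real.sqrt_pos.2
  positivity

lemma odd_gauss_zero : (∫ t : ℝ, Real.exp (-t ^ 2 / 2) * t) = 0 := by
  have h1 := integral_neg_eq_self (fun t : ℝ => Real.exp (-t ^ 2 / 2) * t) (volume : Measure ℝ)
  have h2 : (∫ t : ℝ, Real.exp (-(-t) ^ 2 / 2) * (-t))
      = - ∫ t : ℝ, Real.exp (-t ^ 2 / 2) * t := by
    rw [← integral_neg]
    congr 1; funext t; rw [neg_sq]; ring
  rw [h2] at h1
  linarith [h1]

lemma score_tendsto (he : 0 < e) (hf : 0 < f) (hk1 : 0 < k₁) (hk : k₁ < k₂) (hk2 : k₂ ≤ 4) :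
    Tendsto (fun y => Af e f k₁ k₂ y / Mf e f k₁ k₂ y) atTop (𝓝 0) := by
  have hgpos : ∀ y : ℝ, 0 < g e f k₁ k₂ y := fun y => g_pos he hf hk1 hk
  have hA : Tendsto (fun y => Af e f k₁ k₂ y / g e f k₁ k₂ y) atTop
      (𝓝 (∫ t : ℝ, Real.exp (-t ^ 2 / 2) * t)) := by
    have heq : ∀ y : ℝ, Af e f k₁ k₂ y / g e f k₁ k₂ y
        = ∫ t : ℝ, Real.exp (-t ^ 2 / 2) * t * g e f k₁ k₂ (y + t) / g e f k₁ k₂ y := by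
      intro y; rw [Af_shift, integral_div]
    simp only [heq]
    apply tendsto_integral_filter_of_dominated_convergence
      (fun t => (1 + |t|) * Real.exp (-t ^ 2 / 2) * H e f k₁ t)
    · refine Filter.Eventually.of_forall fun y => ?_
      apply Continuous.aestronglyMeasurable
      exact (Continuous.mul (by continuity)
        ((g_cont he hf hk1 hk).comp (continuous_const.add continuous_id))).div_const _
    · refine Filter.Eventually.of_forall fun y => ?_
      refine Filter.Eventually.of_forall fun t => ?_
      have h0 := hgpos (y + t)
      have h1 : (0:ℝ) < Real.exp (-t ^ 2 / 2) := Real.exp_pos _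
      rw [Real.norm_eq_abs, abs_div, abs_mul, abs_mul, abs_of_pos h1, abs_of_pos h0,
        abs_of_pos (hgpos y)]
      rw [div_le_iff₀ (hgpos y)]
      have h2 : g e f k₁ k₂ (y + t) ≤ H e f k₁ t * g e f k₁ k₂ y :=
        g_ratio he hf hk1 hk hk2 y t
      have hH := H_pos (t := t) he hf hk1
      calc Real.exp (-t ^ 2 / 2) * |t| * g e f k₁ k₂ (y + t)
          ≤ Real.exp (-t ^ 2 / 2) * |t| * (H e f k₁ t * g e f k₁ k₂ y) :=
            mul_le_mul_of_nonneg_left h2 (by positivity)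
        _ ≤ (1 + |t|) * Real.exp (-t ^ 2 / 2) * (H e f k₁ t * g e f k₁ k₂ y) := by
            apply mul_le_mul_of_nonneg_right _ (mul_nonneg hH.le (hgpos y).le)
            nlinarith [abs_nonneg t, h1]
        _ = (1 + |t|) * Real.exp (-t ^ 2 / 2) * H e f k₁ t * g e f k₁ k₂ y := by ring
    · exact Phi_integrable he hf hk1
    · refine Filter.Eventually.of_forall fun t => ?_
      have h1 := tendsto_const_nhds (x := Real.exp (-t ^ 2 / 2) * t)
        (f := atTop (α := ℝ)) |>.mul (g_ratio_tendsto he hf hk1 hk hk2 t)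
      rw [mul_one] at h1
      apply h1.congr
      intro y
      rw [mul_div_assoc]
  have hM : Tendsto (fun y => Mf e f k₁ k₂ y / g e f k₁ k₂ y) atTop
      (𝓝 (∫ t : ℝ, Real.exp (-t ^ 2 / 2))) := by
    have heq : ∀ y : ℝ, Mf e f k₁ k₂ y / g e f k₁ k₂ y
        = ∫ t : ℝ, Real.exp (-t ^ 2 / 2) * g e f k₁ k₂ (y + t) / g e f k₁ k₂ y := by
      intro y; rw [Mf_shift, integral_div]
    simp only [heq]
    apply tendsto_integral_filter_of_dominated_convergence
      (fun t => (1 + |t|) * Real.exp (-t ^ 2 / 2) * H e f k₁ t)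
    · refine Filter.Eventually.of_forall fun y => ?_
      apply Continuous.aestronglyMeasurable
      exact (Continuous.mul (by continuity)
        ((g_cont he hf hk1 hk).comp (continuous_const.add continuous_id))).div_const _
    · refine Filter.Eventually.of_forall fun y => ?_
      refine Filter.Eventually.of_forall fun t => ?_
      have h0 := hgpos (y + t)
      have h1 : (0:ℝ) < Real.exp (-t ^ 2 / 2) := Real.exp_pos _
      rw [Real.norm_eq_abs, abs_div, abs_mul, abs_of_pos h1, abs_of_pos h0,
        abs_of_pos (hgpos y)]
      rw [div_le_iff₀ (hgpos y)]
      have h2 : g e f k₁ k₂ (y + t) ≤ H e f k₁ t * g e f k₁ k₂ y :=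
        g_ratio he hf hk1 hk hk2 y t
      have hH := H_pos (t := t) he hf hk1
      calc Real.exp (-t ^ 2 / 2) * g e f k₁ k₂ (y + t)
          ≤ Real.exp (-t ^ 2 / 2) * (H e f k₁ t * g e f k₁ k₂ y) :=
            mul_le_mul_of_nonneg_left h2 h1.le
        _ ≤ (1 + |t|) * Real.exp (-t ^ 2 / 2) * (H e f k₁ t * g e f k₁ k₂ y) := by
            apply mul_le_mul_of_nonneg_right _ (mul_nonneg hH.le (hgpos y).le)
            nlinarith [abs_nonneg t, h1]
        _ = (1 + |t|) * Real.exp (-t ^ 2 / 2) * H e f k₁ t * g e f k₁ k₂ y := by ring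
    · exact Phi_integrable he hf hk1
    · refine Filter.Eventually.of_forall fun t => ?_
      have h1 := tendsto_const_nhds (x := Real.exp (-t ^ 2 / 2))
        (f := atTop (α := ℝ)) |>.mul (g_ratio_tendsto he hf hk1 hk hk2 t)
      rw [mul_one] at h1
      apply h1.congr
      intro y
      rw [mul_div_assoc]
  have hI₀ : (0:ℝ) < ∫ t : ℝ, Real.exp (-t ^ 2 / 2) := gauss_total_pos
  have hdiv := hA.div hM hI₀.ne'
  rw [odd_gauss_zero, zero_div] at hdiv
  apply hdiv.congr
  intro y
  have hg := (hgpos y).ne'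
  have hH1 := H_pos (t := (1:ℝ)) he hf hk1
  have hMpos : 0 < Mf e f k₁ k₂ y :=
    lt_of_lt_of_le (mul_pos (div_pos (by positivity) hH1) (hgpos y))
      (Mf_lower he hf hk1 hk hk2 y)
  simp only [Pi.div_apply]
  field_simp

lemma inner_int (he : 0 < e) (hf : 0 < f) (hk1 : 0 < k₁) (hk : k₁ < k₂)
    (ha : a ∈ Ioc k₁ k₂) (y : ℝ) :
    Integrable fun β : ℝ => Real.exp (-(β - y) ^ 2 / 2) * (w e f a * q e f a β) := by
  have ha0 : 0 < a := lt_trans hk1 ha.1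
  have hw := w_pos (a := a) he hf ha0
  set C₀ := max (f ^ (-e - 1 / k₁)) (f ^ (-e - 1 / k₂)) with hC₀
  refine Integrable.mono' (g := fun β => (w e f a * C₀) * Real.exp (-(β - y) ^ 2 / 2))
    ((gauss_int y).const_mul _) ?_ ?_
  · exact ((Continuous.mul (by continuity : Continuous fun β : ℝ =>
      Real.exp (-(β - y) ^ 2 / 2)) (continuous_const.mul (q_cont hf ha0))).aestronglyMeasurable)
  · refine Filter.Eventually.of_forall fun β => ?_
    have h1 : (0:ℝ) < Real.exp (-(β - y) ^ 2 / 2) := Real.exp_pos _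
    have h2 : 0 < q e f a β := q_pos hf
    rw [Real.norm_eq_abs, abs_of_nonneg (by positivity)]
    have h3 : q e f a β ≤ C₀ := q_le he hf hk1 ha.1.le ha.2 hk
    calc Real.exp (-(β - y) ^ 2 / 2) * (w e f a * q e f a β)
        ≤ Real.exp (-(β - y) ^ 2 / 2) * (w e f a * C₀) :=
          mul_le_mul_of_nonneg_left (mul_le_mul_of_nonneg_left h3 hw.le) h1.le
      _ = w e f a * C₀ * Real.exp (-(β - y) ^ 2 / 2) := mul_comm _ _

lemma prod_int (he : 0 < e) (hf : 0 < f) (hk1 : 0 < k₁) (hk : k₁ < k₂) (y : ℝ) :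
    Integrable (fun z : ℝ × ℝ => Real.exp (-(z.2 - y) ^ 2 / 2) * (w e f z.1 * q e f z.1 z.2))
      ((volume.restrict (Ioc k₁ k₂)).prod volume) := by
  obtain ⟨W, hW, hWb⟩ := w_bound (e := e) (f := f) he hf hk1 hk
  set C₀ := max (f ^ (-e - 1 / k₁)) (f ^ (-e - 1 / k₂)) with hC₀
  have hC₀pos : 0 < C₀ := lt_max_of_lt_left (Real.rpow_pos_of_pos hf _)
  have hmeas : AEStronglyMeasurable
      (fun z : ℝ × ℝ => Real.exp (-(z.2 - y) ^ 2 / 2) * (w e f z.1 * q e f z.1 z.2))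
      ((volume.restrict (Ioc k₁ k₂)).prod volume) := by
    have hpr := Measure.prod_restrict (μ := (volume : Measure ℝ)) (ν := (volume : Measure ℝ))
      (s := Ioc k₁ k₂) (t := univ)
    rw [Measure.restrict_univ] at hpr
    rw [hpr]
    apply ContinuousOn.aestronglyMeasurable _ (measurableSet_Ioc.prod MeasurableSet.univ)
    intro p hp
    have ha0 : 0 < p.1 := lt_trans hk1 hp.1.1
    apply ContinuousAt.continuousWithinAt
    have hexp : ContinuousAt (fun p : ℝ × ℝ => Real.exp (-(p.2 - y) ^ 2 / 2)) p := by
      apply Continuous.continuousAt; continuity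
    have hw : ContinuousAt (fun p : ℝ × ℝ => w e f p.1) p :=
      (w_contAt he ha0).comp continuousAt_fst
    have hq : ContinuousAt (fun p : ℝ × ℝ => q e f p.1 p.2) p := by
      have h1 : ContinuousAt (fun p : ℝ × ℝ => |p.2| ^ p.1) p := by
        have h2 := Real.continuousAt_rpow (|p.2|, p.1) (Or.inr ha0)
        have hin : Continuous fun x : ℝ × ℝ => (|x.2|, x.1) := by continuity
        exact ContinuousAt.comp (f := fun x : ℝ × ℝ => (|x.2|, x.1))
          (g := fun q : ℝ × ℝ => q.1 ^ q.2) (x := p) h2 hin.continuousAt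
      have hbase : ContinuousAt (fun p : ℝ × ℝ => |p.2| ^ p.1 / 2 + f) p :=
        (h1.div continuousAt_const (by norm_num)).add continuousAt_const
      have hexp2 : ContinuousAt (fun p : ℝ × ℝ => -e - 1 / p.1) p :=
        continuousAt_const.sub (continuousAt_const.div continuousAt_fst ha0.ne')
      exact ContinuousAt.rpow hbase hexp2 (Or.inl (base_pos hf).ne')
    exact hexp.mul (hw.mul hq)
  rw [integrable_prod_iff hmeas]
  constructor
  · filter_upwards [ae_restrict_mem measurableSet_Ioc] with a ha
    exact inner_int he hf hk1 hk ha y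
  · set IG : ℝ := ∫ β : ℝ, Real.exp (-(β - y) ^ 2 / 2) with hIG
    have hIGnn : 0 ≤ IG := integral_nonneg fun β => (Real.exp_pos _).le
    refine Integrable.mono' (g := fun _ => W * C₀ * IG)
      (integrableOn_const measure_Ioc_lt_top.ne) (hmeas.norm.integral_prod_right') ?_
    filter_upwards [ae_restrict_mem measurableSet_Ioc] with a ha
    have ha0 : 0 < a := lt_trans hk1 ha.1
    have hnn : 0 ≤ ∫ β : ℝ, ‖Real.exp (-(β - y) ^ 2 / 2) * (w e f a * q e f a β)‖ :=
      integral_nonneg fun β => norm_nonneg _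
    rw [Real.norm_eq_abs, abs_of_nonneg hnn]
    have h1 : ∀ β : ℝ, ‖Real.exp (-(β - y) ^ 2 / 2) * (w e f a * q e f a β)‖
        ≤ W * C₀ * Real.exp (-(β - y) ^ 2 / 2) := by
      intro β
      have he1 : (0:ℝ) < Real.exp (-(β - y) ^ 2 / 2) := Real.exp_pos _
      have hw := w_pos (a := a) he hf ha0
      have hq := q_pos (a := a) (β := β) (e := e) hf
      rw [Real.norm_eq_abs, abs_of_nonneg (by positivity)]
      have h3 : w e f a * q e f a β ≤ W * C₀ :=
        mul_le_mul (hWb a ⟨ha.1.le, ha.2⟩) (q_le he hf hk1 ha.1.le ha.2 hk) hq.le hW.le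
      calc Real.exp (-(β - y) ^ 2 / 2) * (w e f a * q e f a β)
          ≤ Real.exp (-(β - y) ^ 2 / 2) * (W * C₀) := mul_le_mul_of_nonneg_left h3 he1.le
        _ = W * C₀ * Real.exp (-(β - y) ^ 2 / 2) := mul_comm _ _
    calc (∫ β : ℝ, ‖Real.exp (-(β - y) ^ 2 / 2) * (w e f a * q e f a β)‖)
        ≤ ∫ β : ℝ, W * C₀ * Real.exp (-(β - y) ^ 2 / 2) :=
          integral_mono ((inner_int he hf hk1 hk ha y).norm)
            ((gauss_int y).const_mul _) h1
      _ = W * C₀ * IG := by rw [integral_const_mul]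

lemma m_repr (he : 0 < e) (hf : 0 < f) (hk1 : 0 < k₁) (hk : k₁ < k₂) (y : ℝ) :
    (1 / (k₂ - k₁)) * (∫ a in k₁..k₂, ∫ β : ℝ,
      Real.exp (-(β - y) ^ 2 / 2) / Real.sqrt (2 * π) *
        (a / (2 ^ (1 / a + 1) * Real.Gamma (1 / a))) *
        (f ^ e / Real.Gamma e) * Real.Gamma (e + 1 / a) *
        (|β| ^ a / 2 + f) ^ (-e - 1 / a))
      = 1 / ((k₂ - k₁) * Real.sqrt (2 * π)) * Mf e f k₁ k₂ y := by
  have hinner : ∀ a : ℝ, (∫ β : ℝ,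
      Real.exp (-(β - y) ^ 2 / 2) / Real.sqrt (2 * π) *
        (a / (2 ^ (1 / a + 1) * Real.Gamma (1 / a))) *
        (f ^ e / Real.Gamma e) * Real.Gamma (e + 1 / a) *
        (|β| ^ a / 2 + f) ^ (-e - 1 / a))
      = (1 / Real.sqrt (2 * π)) *
          ∫ β : ℝ, Real.exp (-(β - y) ^ 2 / 2) * (w e f a * q e f a β) := by
    intro a
    rw [← integral_const_mul]
    congr 1; funext β; rw [w, q]; ring
  rw [intervalIntegral.integral_of_le hk.le]
  simp only [hinner]
  rw [integral_const_mul]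
  have hswap : (∫ a in Ioc k₁ k₂, ∫ β : ℝ,
      Real.exp (-(β - y) ^ 2 / 2) * (w e f a * q e f a β))
      = ∫ β : ℝ, ∫ a in Ioc k₁ k₂, Real.exp (-(β - y) ^ 2 / 2) * (w e f a * q e f a β) :=
    integral_integral_swap (prod_int he hf hk1 hk y)
  rw [hswap]
  have hg : ∀ β : ℝ, (∫ a in Ioc k₁ k₂, Real.exp (-(β - y) ^ 2 / 2) * (w e f a * q e f a β))
      = Real.exp (-(β - y) ^ 2 / 2) * g e f k₁ k₂ β := by
    intro β; rw [g, integral_const_mul]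
  simp only [hg]
  rw [← Mf, one_div ((k₂ - k₁) * Real.sqrt (2 * π)), mul_inv]
  ring

end TailRob

open TailRob in
theorem tail_robustness (e f k₁ k₂ : ℝ) (he : 0 < e) (hf : 0 < f) (hk1 : 0 < k₁)
    (hk : k₁ < k₂) (hk2 : k₂ ≤ 4) (m : ℝ → ℝ)
    (hm : ∀ y, m y = (1 / (k₂ - k₁)) * ∫ a in k₁..k₂, ∫ β : ℝ,
      Real.exp (-(β - y) ^ 2 / 2) / Real.sqrt (2 * π) *
        (a / (2 ^ (1 / a + 1) * Real.Gamma (1 / a))) *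
        (f ^ e / Real.Gamma e) * Real.Gamma (e + 1 / a) *
        (|β| ^ a / 2 + f) ^ (-e - 1 / a)) :
    Tendsto (fun y => deriv (fun z => Real.log (m z)) y) atTop (nhds 0) ∧
    Tendsto (fun y => deriv (fun z => Real.log (m z)) y) atBot (nhds 0) ∧
    ∃ C : ℝ, ∀ y : ℝ, |deriv (fun z => Real.log (m z)) y| ≤ C := by
  have hπ : (0:ℝ) < π := Real.pi_pos
  have hs2π : 0 < Real.sqrt (2 * π) := Real.sqrt_pos.2 (by positivity)
  have hkk : 0 < k₂ - k₁ := sub_pos.2 hk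
  have hc'pos : 0 < 1 / ((k₂ - k₁) * Real.sqrt (2 * π)) := by positivity
  have hH1 : 0 < H e f k₁ 1 := H_pos he hf hk1
  have hgpos : ∀ y : ℝ, 0 < g e f k₁ k₂ y := fun y => g_pos he hf hk1 hk
  have hMpos : ∀ y : ℝ, 0 < Mf e f k₁ k₂ y := fun y =>
    lt_of_lt_of_le (mul_pos (div_pos (by positivity) hH1) (hgpos y))
      (Mf_lower he hf hk1 hk hk2 y)
  have hmeq : ∀ y, m y = 1 / ((k₂ - k₁) * Real.sqrt (2 * π)) * Mf e f k₁ k₂ y := by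
    intro y
    rw [hm y]
    exact m_repr he hf hk1 hk y
  have hlog : (fun z => Real.log (m z)) =
      fun z => Real.log (1 / ((k₂ - k₁) * Real.sqrt (2 * π)))
        + Real.log (Mf e f k₁ k₂ z) :=
    funext fun z => by rw [hmeq z, Real.log_mul hc'pos.ne' (hMpos z).ne']
  have hderiv : ∀ y, deriv (fun z => Real.log (m z)) y
      = Af e f k₁ k₂ y / Mf e f k₁ k₂ y := by
    intro y
    rw [hlog, deriv_const_add]
    exact ((Mf_hasDeriv he hf hk1 hk y).log (hMpos y).ne').deriv
  have hTop : Tendsto (fun y => deriv (fun z => Real.log (m z)) y) atTop (nhds 0) := by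
    apply (score_tendsto he hf hk1 hk hk2).congr
    intro y
    exact (hderiv y).symm
  refine ⟨hTop, ?_, ?_⟩
  · -- atBot, via evenness of m
    have heven : ∀ z, m (-z) = m z := by
      intro z
      rw [hm z, hm (-z)]
      congr 1
      apply intervalIntegral.integral_congr
      intro a _
      dsimp only
      calc (∫ β : ℝ, Real.exp (-(β - -z) ^ 2 / 2) / Real.sqrt (2 * π) *
              (a / (2 ^ (1 / a + 1) * Real.Gamma (1 / a))) *
              (f ^ e / Real.Gamma e) * Real.Gamma (e + 1 / a) *
              (|β| ^ a / 2 + f) ^ (-e - 1 / a))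
          = ∫ β : ℝ, Real.exp (-(-β - z) ^ 2 / 2) / Real.sqrt (2 * π) *
              (a / (2 ^ (1 / a + 1) * Real.Gamma (1 / a))) *
              (f ^ e / Real.Gamma e) * Real.Gamma (e + 1 / a) *
              (|(-β)| ^ a / 2 + f) ^ (-e - 1 / a) := by
            congr 1; funext β
            rw [abs_neg, show -(β - -z) ^ 2 / 2 = -(-β - z) ^ 2 / 2 from by ring]
        _ = ∫ β : ℝ, Real.exp (-(β - z) ^ 2 / 2) / Real.sqrt (2 * π) *
              (a / (2 ^ (1 / a + 1) * Real.Gamma (1 / a))) *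
              (f ^ e / Real.Gamma e) * Real.Gamma (e + 1 / a) *
              (|β| ^ a / 2 + f) ^ (-e - 1 / a) :=
            integral_neg_eq_self (fun β : ℝ => Real.exp (-(β - z) ^ 2 / 2) / Real.sqrt (2 * π) *
              (a / (2 ^ (1 / a + 1) * Real.Gamma (1 / a))) *
              (f ^ e / Real.Gamma e) * Real.Gamma (e + 1 / a) *
              (|β| ^ a / 2 + f) ^ (-e - 1 / a)) volume
    have hodd : ∀ y, deriv (fun z => Real.log (m z)) y
        = -(deriv (fun z => Real.log (m z)) (-y)) := by
      intro y
      have hfun : (fun z => Real.log (m z)) = fun z => Real.log (m (-z)) :=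
        funext fun z => by rw [heven z]
      nth_rewrite 1 [hfun]
      exact deriv_comp_neg (f := fun z => Real.log (m z)) (x := y)
    have h1 : Tendsto (fun y => deriv (fun z => Real.log (m z)) (-y)) atBot (nhds 0) :=
      hTop.comp tendsto_neg_atBot_atTop
    have h2 := h1.neg
    rw [neg_zero] at h2
    apply h2.congr
    intro y
    exact (hodd y).symm
  · -- uniform bound
    set CA : ℝ := ∫ t : ℝ, (1 + |t|) * Real.exp (-t ^ 2 / 2) * H e f k₁ t with hCA
    set cB : ℝ := 2 * Real.exp (-(1:ℝ)/2) / H e f k₁ 1 with hcB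
    have hcBpos : 0 < cB := by
      rw [hcB]; exact div_pos (by positivity) hH1
    have hCAnn : 0 ≤ CA := by
      rw [hCA]
      apply integral_nonneg
      intro t
      exact mul_nonneg (mul_nonneg (by positivity) (Real.exp_pos _).le)
        (H_pos he hf hk1).le
    refine ⟨CA / cB, fun y => ?_⟩
    rw [hderiv y, abs_div, abs_of_pos (hMpos y)]
    have h1 : |Af e f k₁ k₂ y| ≤ CA * g e f k₁ k₂ y := Af_bound he hf hk1 hk hk2 y
    have h2 : cB * g e f k₁ k₂ y ≤ Mf e f k₁ k₂ y := Mf_lower he hf hk1 hk hk2 y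
    calc |Af e f k₁ k₂ y| / Mf e f k₁ k₂ y
        ≤ CA * g e f k₁ k₂ y / (cB * g e f k₁ k₂ y) :=
          div_le_div₀ (mul_nonneg hCAnn (hgpos y).le) h1 (mul_pos hcBpos (hgpos y)) h2
      _ = CA / cB := mul_div_mul_right _ _ (hgpos y).ne'
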